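/- Let Q be a probability measure on Ω = X × Y with density g := dQ/dQ^⊥ with respect to the product of its marginals Q^⊥, and let A, B be disjoint measurable subsets of ℝ with c₁ := Q(φ'(h)∈B) and c₂ := Q(φ'(h)∈A) for a fixed measurable function h. For n large enough, the function g_n := g + (c₁/n) g·1{φ'(h)∈A} − (c₂/n) g·1{φ'(h)∈B} is nonnegative and satisfies ∫ g_n dQ^⊥ = 1; moreover, if inf A > sup B, c₁ > 0, c₂ > 0, then ∫ φ'(h) g_n dQ^⊥ ≥ ∫ φ'(h) dQ + (c₁c₂/n)(inf A − sup B) > ∫ φ'(h) dQ. -/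

import Mathlib

open MeasureTheory

/-- The perturbation used in the proof of right-continuity of the LDP rate
function: if Q has density g w.r.t. the product of its marginals Q^⊥,
A, B are disjoint measurable sets of reals with c₁ = Q(ψ ∈ B), c₂ = Q(ψ ∈ A)
(ψ = φ'(h)), then for n large enough g_n := g + (c₁/n)·g·1{ψ∈A} - (c₂/n)·g·1{ψ∈B}
is a nonnegative density integrating to 1 w.r.t. Q^⊥; moreover if inf A > sup B,
c₁ > 0 and c₂ > 0, then ∫ ψ g_n dQ^⊥ ≥ ∫ ψ g dQ^⊥ + (c₁c₂/n)(inf A - sup B)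
> ∫ ψ g dQ^⊥. -/
theorem perturbation_increases_integral
    {X Y : Type*} [MeasurableSpace X] [MeasurableSpace Y]
    (Q : Measure (X × Y)) [IsProbabilityMeasure Q]
    (g : X × Y → ℝ) (hg0 : ∀ p, 0 ≤ g p)
    (hgdens : Q = ((Q.map Prod.fst).prod (Q.map Prod.snd)).withDensity
      (fun p => ENNReal.ofReal (g p)))
    (hgint : Integrable g ((Q.map Prod.fst).prod (Q.map Prod.snd)))
    (ψ : X × Y → ℝ) (hψmeas : Measurable ψ)
    (hψgint : Integrable (fun p => ψ p * g p) ((Q.map Prod.fst).prod (Q.map Prod.snd)))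
    (A B : Set ℝ) (hA : MeasurableSet A) (hB : MeasurableSet B) (hAB : Disjoint A B)
    (c₁ c₂ : ℝ)
    (hc₁ : c₁ = (Q {p | ψ p ∈ B}).toReal)
    (hc₂ : c₂ = (Q {p | ψ p ∈ A}).toReal)
    (gn : ℕ → (X × Y) → ℝ)
    (hgn : ∀ (n : ℕ) (p : X × Y), gn n p
      = g p + (c₁ / n) * Set.indicator {q | ψ q ∈ A} g p
          - (c₂ / n) * Set.indicator {q | ψ q ∈ B} g p) :
    (∃ N : ℕ, ∀ n ≥ N, (∀ p, 0 ≤ gn n p) ∧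
      ∫ p, gn n p ∂((Q.map Prod.fst).prod (Q.map Prod.snd)) = 1) ∧
    (BddBelow A → BddAbove B → sSup B < sInf A → 0 < c₁ → 0 < c₂ →
      ∀ n : ℕ, 1 ≤ n →
        (∫ p, ψ p * g p ∂((Q.map Prod.fst).prod (Q.map Prod.snd))
            + (c₁ * c₂ / n) * (sInf A - sSup B)
          ≤ ∫ p, ψ p * gn n p ∂((Q.map Prod.fst).prod (Q.map Prod.snd))) ∧
        (∫ p, ψ p * g p ∂((Q.map Prod.fst).prod (Q.map Prod.snd))
          < ∫ p, ψ p * gn n p ∂((Q.map Prod.fst).prod (Q.map Prod.snd)))) := by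
  set μ := (Q.map Prod.fst).prod (Q.map Prod.snd) with hμdef
  set SA : Set (X × Y) := {q | ψ q ∈ A} with hSAdef
  set SB : Set (X × Y) := {q | ψ q ∈ B} with hSBdef
  have hSAm : MeasurableSet SA := hψmeas hA
  have hSBm : MeasurableSet SB := hψmeas hB
  have hkey : ∀ S : Set (X × Y), MeasurableSet S →
      (Q S).toReal = ∫ p in S, g p ∂μ := by
    intro S hS
    rw [hgdens, withDensity_apply _ hS,
      integral_eq_lintegral_of_nonneg_ae
        (Filter.Eventually.of_forall fun p => hg0 p)
        (hgint.aestronglyMeasurable.restrict)]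
  have hc₁' : c₁ = ∫ p in SB, g p ∂μ := by rw [hc₁]; exact hkey SB hSBm
  have hc₂' : c₂ = ∫ p in SA, g p ∂μ := by rw [hc₂]; exact hkey SA hSAm
  have hc₁0 : 0 ≤ c₁ := by rw [hc₁]; exact ENNReal.toReal_nonneg
  have hc₂0 : 0 ≤ c₂ := by rw [hc₂]; exact ENNReal.toReal_nonneg
  have hc₂1 : c₂ ≤ 1 := by
    rw [hc₂]
    calc (Q SA).toReal ≤ (1 : ENNReal).toReal :=
          ENNReal.toReal_mono (by simp) (prob_le_one)
      _ = 1 := by simp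
  have hgint1 : ∫ p, g p ∂μ = 1 := by
    have := hkey Set.univ MeasurableSet.univ
    simpa [measure_univ] using this.symm
  have hintA : Integrable (SA.indicator g) μ := hgint.indicator hSAm
  have hintB : Integrable (SB.indicator g) μ := hgint.indicator hSBm
  have hintψA : Integrable (SA.indicator fun p => ψ p * g p) μ := hψgint.indicator hSAm
  have hintψB : Integrable (SB.indicator fun p => ψ p * g p) μ := hψgint.indicator hSBm
  constructor
  · -- existence part : N = 1 works
    refine ⟨1, fun n hn => ?_⟩
    have hn1 : (1 : ℝ) ≤ (n : ℝ) := by exact_mod_cast hn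
    have hnpos : (0 : ℝ) < (n : ℝ) := lt_of_lt_of_le one_pos hn1
    constructor
    · intro p
      rw [hgn n p]
      by_cases hpB : p ∈ SB
      · have hpA : p ∉ SA := by
          intro hpA
          exact (hAB.le_bot ⟨hpA, hpB⟩ : (ψ p) ∈ (⊥ : Set ℝ))
        rw [Set.indicator_of_mem hpB, Set.indicator_of_notMem hpA]
        have h1 : c₂ / n ≤ 1 := by
          rw [div_le_one hnpos]; exact hc₂1.trans hn1
        have := mul_le_mul_of_nonneg_right h1 (hg0 p)
        nlinarith [hg0 p]
      · rw [Set.indicator_of_notMem hpB]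
        have : 0 ≤ (c₁ / n) * SA.indicator g p := by
          apply mul_nonneg (div_nonneg hc₁0 hnpos.le)
          exact Set.indicator_nonneg (fun q _ => hg0 q) p
        nlinarith [hg0 p]
    · have heq : (fun p => gn n p)
          = fun p => (g p + (c₁ / n) * SA.indicator g p) - (c₂ / n) * SB.indicator g p := by
        funext p; rw [hgn n p]
      have hi1 : Integrable (fun p => g p + (c₁ / n) * SA.indicator g p) μ :=
        hgint.add (hintA.const_mul _)
      rw [heq, integral_sub hi1 (hintB.const_mul _),
        integral_add hgint (hintA.const_mul _), integral_const_mul, integral_const_mul,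
        integral_indicator hSAm, integral_indicator hSBm, hgint1, ← hc₂', ← hc₁']
      ring
  · -- monotonicity part
    intro hAbdd hBbdd hBA hc₁pos hc₂pos n hn
    have hn1 : (1 : ℝ) ≤ (n : ℝ) := by exact_mod_cast hn
    have hnpos : (0 : ℝ) < (n : ℝ) := lt_of_lt_of_le one_pos hn1
    have hintψgn : ∫ p, ψ p * gn n p ∂μ
        = ∫ p, ψ p * g p ∂μ + (c₁ / n) * ∫ p in SA, ψ p * g p ∂μ
          - (c₂ / n) * ∫ p in SB, ψ p * g p ∂μ := by
      have h1 : (fun p => ψ p * gn n p)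
          = fun p => (ψ p * g p + (c₁ / n) * SA.indicator (fun q => ψ q * g q) p)
              - (c₂ / n) * SB.indicator (fun q => ψ q * g q) p := by
        funext p; rw [hgn n p]
        have hA' : SA.indicator (fun q => ψ q * g q) p = ψ p * SA.indicator g p :=
          Set.indicator_mul_right SA ψ g
        have hB' : SB.indicator (fun q => ψ q * g q) p = ψ p * SB.indicator g p :=
          Set.indicator_mul_right SB ψ g
        rw [hA', hB']; ring
      have hi1 : Integrable
          (fun p => ψ p * g p + (c₁ / n) * SA.indicator (fun q => ψ q * g q) p) μ :=
        hψgint.add (hintψA.const_mul _)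
      rw [h1, integral_sub hi1 (hintψB.const_mul _),
        integral_add hψgint (hintψA.const_mul _), integral_const_mul, integral_const_mul,
        integral_indicator hSAm, integral_indicator hSBm]
    -- bounds on the set integrals
    have hboundA : sInf A * c₂ ≤ ∫ p in SA, ψ p * g p ∂μ := by
      have : ∫ p in SA, sInf A * g p ∂μ ≤ ∫ p in SA, ψ p * g p ∂μ := by
        apply setIntegral_mono_on ((hgint.const_mul (sInf A)).integrableOn)
          hψgint.integrableOn hSAm
        intro p hp
        exact mul_le_mul_of_nonneg_right (csInf_le hAbdd hp) (hg0 p)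
      rwa [integral_const_mul, ← hc₂'] at this
    have hboundB : ∫ p in SB, ψ p * g p ∂μ ≤ sSup B * c₁ := by
      have : ∫ p in SB, ψ p * g p ∂μ ≤ ∫ p in SB, sSup B * g p ∂μ := by
        apply setIntegral_mono_on hψgint.integrableOn
          ((hgint.const_mul (sSup B)).integrableOn) hSBm
        intro p hp
        exact mul_le_mul_of_nonneg_right (le_csSup hBbdd hp) (hg0 p)
      rwa [integral_const_mul, ← hc₁'] at this
    have hfirst : ∫ p, ψ p * g p ∂μ + (c₁ * c₂ / n) * (sInf A - sSup B)
        ≤ ∫ p, ψ p * gn n p ∂μ := by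
      rw [hintψgn]
      have h1 : (c₁ / n) * (sInf A * c₂) ≤ (c₁ / n) * ∫ p in SA, ψ p * g p ∂μ :=
        mul_le_mul_of_nonneg_left hboundA (div_nonneg hc₁0 hnpos.le)
      have h2 : (c₂ / n) * ∫ p in SB, ψ p * g p ∂μ ≤ (c₂ / n) * (sSup B * c₁) :=
        mul_le_mul_of_nonneg_left hboundB (div_nonneg hc₂0 hnpos.le)
      have : (c₁ * c₂ / n) * (sInf A - sSup B)
          = (c₁ / n) * (sInf A * c₂) - (c₂ / n) * (sSup B * c₁) := by
        field_simp
      linarith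
    refine ⟨hfirst, lt_of_lt_of_le ?_ hfirst⟩
    have : 0 < (c₁ * c₂ / n) * (sInf A - sSup B) := by
      apply mul_pos (div_pos (mul_pos hc₁pos hc₂pos) hnpos)
      linarith
    linarith
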